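/- For every real a ≥ 1 and every real x ≥ 0, (exp(x) − 1)/(exp(x) + a) ≤ x/(ln a + 2). -/

import Mathlib

theorem exp_ratio_le_linear (a x : ℝ) (ha : 1 ≤ a) (hx : 0 ≤ x) :
    (Real.exp x - 1) / (Real.exp x + a) ≤ x / (Real.log a + 2) := by
  set L := Real.log a with hL
  have hL0 : 0 ≤ L := Real.log_nonneg ha
  have ha0 : (0:ℝ) < a := lt_of_lt_of_le one_pos ha
  set f : ℝ → ℝ := fun y => y * (Real.exp y + a) - (Real.exp y - 1) * (L + 2) with hf
  have hderiv : ∀ y : ℝ, HasDerivAt f (Real.exp y * (y - L - 1) + a) y := by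
    intro y
    have h1 : HasDerivAt (fun y : ℝ => y * (Real.exp y + a))
        (1 * (Real.exp y + a) + y * Real.exp y) y :=
      (hasDerivAt_id y).mul ((Real.hasDerivAt_exp y).add_const a)
    have h2 : HasDerivAt (fun y : ℝ => (Real.exp y - 1) * (L + 2))
        (Real.exp y * (L + 2)) y :=
      ((Real.hasDerivAt_exp y).sub_const 1).mul_const (L + 2)
    have : HasDerivAt (fun y : ℝ => y * (Real.exp y + a) - (Real.exp y - 1) * (L + 2))
        (1 * (Real.exp y + a) + y * Real.exp y - Real.exp y * (L + 2)) y := h1.sub h2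
    convert this using 1
    ring
  have hderiv_nonneg : ∀ y : ℝ, 0 ≤ Real.exp y * (y - L - 1) + a := by
    intro y
    have key : Real.exp (y - L) * (y - L - 1) ≥ -1 := by
      have h1 := Real.add_one_le_exp (-(y - L))
      have hme : Real.exp (y - L) * Real.exp (-(y - L)) = 1 := by
        rw [← Real.exp_add]; simp
      nlinarith [Real.exp_pos (y - L), Real.exp_pos (-(y - L))]
    have hexpL : Real.exp L = a := Real.exp_log ha0
    have hsplit : Real.exp y = a * Real.exp (y - L) := by
      rw [← hexpL, ← Real.exp_add]; ring_nf
    rw [hsplit]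
    nlinarith [ha0, key]
  have hmono : MonotoneOn f (Set.Ici (0:ℝ)) := by
    apply monotoneOn_of_deriv_nonneg (convex_Ici 0)
    · exact Continuous.continuousOn (by continuity)
    · exact fun y _ => (hderiv y).differentiableAt.differentiableWithinAt
    · intro y _
      rw [(hderiv y).deriv]
      exact hderiv_nonneg y
  have hf0 : f 0 = 0 := by simp [hf]
  have hfx : 0 ≤ f x := by
    have := hmono (Set.self_mem_Ici) (Set.mem_Ici.mpr hx) hx
    rwa [hf0] at this
  have hden1 : 0 < Real.exp x + a := by positivity
  have hden2 : 0 < L + 2 := by linarith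
  rw [div_le_div_iff₀ hden1 hden2]
  simp only [hf] at hfx
  linarith
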